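/- Let (C, R) be a weakly reversible chemical reaction network on N species, and let C be partitioned into ordered tiers T_1, …, T_P (nonempty pairwise disjoint sets with union C). Suppose y_0 → y_0' ∈ R is a reaction whose source y_0 lies in tier T_i and whose product y_0' lies in tier T_{i−m} for some m ∈ {1,…,i−1}. Then there exist reactions r_1, …, r_b ∈ R such that, writing d_{ℓ,s} and d_{ℓ,p} for the tier indices of the source and product complexes of r_ℓ respectively: (1) d_{1,s} ≤ i − m; (2) d_{ℓ,s} < d_{ℓ,p} for every ℓ ∈ {1,…,b}; (3) d_{ℓ,s} ≤ d_{ℓ−1,p} for every ℓ ∈ {2,…,b}; (4) d_{b,p} ≥ i; and (5) d_{ℓ,s} < i for every ℓ ∈ {1,…,b}. -/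

import Mathlib

open Filter

/-- A chemical reaction network on `N` species: a finite set `C ⊆ ℤ^N_{≥0}` of complexes
and a finite set `R` of reactions `y → y'` with `y ≠ y'`, both endpoints complexes,
such that every complex takes part in at least one reaction. -/
def IsNetwork {N : ℕ} (C : Finset (Fin N → ℕ)) (R : Finset ((Fin N → ℕ) × (Fin N → ℕ))) : Prop :=
  (∀ r ∈ R, r.1 ∈ C ∧ r.2 ∈ C ∧ r.1 ≠ r.2) ∧ (∀ y ∈ C, ∃ r ∈ R, r.1 = y ∨ r.2 = y)

/-- Directed edge of the reaction diagram. -/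
def dirStep {N : ℕ} (R : Finset ((Fin N → ℕ) × (Fin N → ℕ))) (a b : Fin N → ℕ) : Prop :=
  (a, b) ∈ R

/-- Undirected edge of the reaction diagram. -/
def symStep {N : ℕ} (R : Finset ((Fin N → ℕ) × (Fin N → ℕ))) (a b : Fin N → ℕ) : Prop :=
  (a, b) ∈ R ∨ (b, a) ∈ R

/-- A network is weakly reversible when each linkage class (connected component of the
reaction diagram, ignoring directions) is strongly connected as a directed graph:
whenever `b` is reachable from `a` ignoring directions, it is reachable along
directed reactions. -/
def WeaklyReversible {N : ℕ} (R : Finset ((Fin N → ℕ) × (Fin N → ℕ))) : Prop :=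
  ∀ a b, Relation.ReflTransGen (symStep R) a b → Relation.ReflTransGen (dirStep R) a b

/-- Given a weakly reversible network whose complexes are partitioned into ordered tiers
`T 0 ≻ T 1 ≻ ⋯ ≻ T (P-1)` (smaller index = higher tier), and a reaction `y0 → y0'`
whose source lies in tier `i0` and whose product lies in a strictly higher tier
`i1 < i0`, there are reactions `r 0, …, r (b-1) ∈ R` whose source/product tier indices
`ds ℓ` / `dp ℓ` satisfy: (1) `ds 0 ≤ i1`; (2) `ds ℓ < dp ℓ` for all `ℓ`;
(3) `ds ℓ ≤ dp (ℓ-1)` for `ℓ ≥ 1`; (4) `dp (b-1) ≥ i0`; (5) `ds ℓ < i0` for all `ℓ`. -/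

lemma key_sel {α : Type*} [LinearOrder α] :
    ∀ k (t : ℕ → α), t 0 < t k →
    ∃ b, 0 < b ∧ ∃ sel : ℕ → ℕ,
      (∀ ℓ < b, sel ℓ < k) ∧
      t (sel 0) ≤ t 0 ∧
      (∀ ℓ < b, t (sel ℓ) < t (sel ℓ + 1)) ∧
      (∀ ℓ, 1 ≤ ℓ → ℓ < b → t (sel ℓ) ≤ t (sel (ℓ - 1) + 1)) ∧
      t k ≤ t (sel (b - 1) + 1) ∧
      (∀ ℓ < b, t (sel ℓ) < t k) := by
  intro k
  induction k using Nat.strong_induction_on with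
  | _ k IH =>
    intro t h
    have hk : 1 ≤ k := by
      by_contra hc
      have : k = 0 := by omega
      rw [this] at h
      exact lt_irrefl _ h
    set j := Nat.findGreatest (fun j => t j ≤ t 0) (k - 1) with hjdef
    have hjle : j ≤ k - 1 := Nat.findGreatest_le _
    have hjk : j < k := by omega
    have hPj : t j ≤ t 0 :=
      Nat.findGreatest_spec (P := fun j => t j ≤ t 0) (m := 0) (Nat.zero_le _) le_rfl
    have hup : t 0 < t (j + 1) := by
      by_cases hc : j + 1 = k
      · rw [hc]; exact h
      · have h1 : j + 1 ≤ k - 1 := by omega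
        have h2 := Nat.findGreatest_is_greatest (P := fun j => t j ≤ t 0)
          (by omega : Nat.findGreatest (fun j => t j ≤ t 0) (k-1) < j + 1) h1
        exact lt_of_not_ge h2
    by_cases hbig : t k ≤ t (j + 1)
    · refine ⟨1, one_pos, fun _ => j, ?_, hPj, ?_, ?_, hbig, ?_⟩
      · intro ℓ _; exact hjk
      · intro ℓ _; exact lt_of_le_of_lt hPj hup
      · intro ℓ h1 h2; omega
      · intro ℓ _; exact lt_of_le_of_lt hPj h
    · push_neg at hbig
      have hlt' : k - (j + 1) < k := by omega
      have hcan : k - (j + 1) + (j + 1) = k := by omega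
      have h0' : (fun m => t (m + (j + 1))) 0 < (fun m => t (m + (j + 1))) (k - (j + 1)) := by
        simp only [Nat.zero_add, hcan]
        exact hbig
      obtain ⟨b', hb', sel', h1', h2', h3', h4', h5', h6'⟩ := IH _ hlt' (fun m => t (m + (j + 1))) h0'
      refine ⟨b' + 1, by omega, fun ℓ => if ℓ = 0 then j else sel' (ℓ - 1) + (j + 1),
        ?_, ?_, ?_, ?_, ?_, ?_⟩
      · intro ℓ hℓ
        by_cases h0 : ℓ = 0
        · simp [h0, hjk]
        · simp only [if_neg h0]
          have := h1' (ℓ - 1) (by omega)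
          omega
      · simpa using hPj
      · intro ℓ hℓ
        by_cases h0 : ℓ = 0
        · simp only [h0, if_pos rfl]
          exact lt_of_le_of_lt hPj hup
        · simp only [if_neg h0]
          have := h3' (ℓ - 1) (by omega)
          have heq : sel' (ℓ - 1) + 1 + (j + 1) = sel' (ℓ - 1) + (j + 1) + 1 := by omega
          rwa [heq] at this
      · intro ℓ hℓ1 hℓb
        have h0 : ℓ ≠ 0 := by omega
        simp only [if_neg h0]
        by_cases h1 : ℓ = 1
        · subst h1
          simp only [Nat.sub_self, if_pos rfl]
          have := h2'
          simp only [Nat.zero_add] at this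
          exact this
        · have hm1 : ℓ - 1 ≠ 0 := by omega
          simp only [if_neg hm1]
          have := h4' (ℓ - 1) (by omega) (by omega)
          have heq : sel' (ℓ - 1 - 1) + 1 + (j + 1) = sel' (ℓ - 1 - 1) + (j + 1) + 1 := by omega
          have heq2 : ℓ - 1 - 1 = ℓ - 2 := by omega
          rw [heq] at this
          have heq3 : ℓ - 1 - 1 = (ℓ - 1) - 1 := rfl
          exact this
      · have hb1 : b' + 1 - 1 = b' := by omega
        rw [hb1]
        have h0 : b' ≠ 0 := by omega
        simp only [if_neg h0]
        have := h5'
        simp only [hcan] at this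
        have heq : sel' (b' - 1) + 1 + (j + 1) = sel' (b' - 1) + (j + 1) + 1 := by omega
        rwa [heq] at this
      · intro ℓ hℓ
        by_cases h0 : ℓ = 0
        · simp only [h0, if_pos rfl]
          exact lt_of_le_of_lt hPj h
        · simp only [if_neg h0]
          have := h6' (ℓ - 1) (by omega)
          simp only [hcan] at this
          exact this

lemma path_exists {N : ℕ} (R : Finset ((Fin N → ℕ) × (Fin N → ℕ))) {a b : Fin N → ℕ}
    (h : Relation.ReflTransGen (dirStep R) a b) :
    ∃ (k : ℕ) (z : ℕ → (Fin N → ℕ)), z 0 = a ∧ z k = b ∧ ∀ j < k, (z j, z (j + 1)) ∈ R := by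
  induction h with
  | refl => exact ⟨0, fun _ => a, rfl, rfl, fun j hj => absurd hj (by omega)⟩
  | @tail c d h1 h2 ih =>
    obtain ⟨k, z, hz0, hzk, hstep⟩ := ih
    refine ⟨k + 1, fun j => if j ≤ k then z j else d, ?_, ?_, ?_⟩
    · simp [hz0]
    · simp
    · intro j hj
      by_cases hjk : j < k
      · simp only [if_pos (by omega : j ≤ k), if_pos (by omega : j + 1 ≤ k)]
        exact hstep j hjk
      · have hj' : j = k := by omega
        subst hj'
        simp only [if_pos le_rfl, if_neg (by omega : ¬ j + 1 ≤ j)]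
        rw [hzk]
        exact h2

theorem stmt_16 {N P : ℕ} (C : Finset (Fin N → ℕ)) (R : Finset ((Fin N → ℕ) × (Fin N → ℕ)))
    (hnet : IsNetwork C R) (hwr : WeaklyReversible R)
    (T : Fin P → Set (Fin N → ℕ))
    (hTne : ∀ i, (T i).Nonempty)
    (hTdisj : ∀ i j, i ≠ j → Disjoint (T i) (T j))
    (hTunion : (⋃ i, T i) = (C : Set (Fin N → ℕ)))
    (y0 y0' : Fin N → ℕ) (hr : (y0, y0') ∈ R)
    (i0 i1 : Fin P) (hy0 : y0 ∈ T i0) (hy0' : y0' ∈ T i1) (hlt : i1 < i0) :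
    ∃ b : ℕ, 0 < b ∧
      ∃ (rs : ℕ → (Fin N → ℕ) × (Fin N → ℕ)) (ds dp : ℕ → Fin P),
        (∀ ℓ < b, rs ℓ ∈ R ∧ (rs ℓ).1 ∈ T (ds ℓ) ∧ (rs ℓ).2 ∈ T (dp ℓ)) ∧
        ds 0 ≤ i1 ∧
        (∀ ℓ < b, ds ℓ < dp ℓ) ∧
        (∀ ℓ, 1 ≤ ℓ → ℓ < b → ds ℓ ≤ dp (ℓ - 1)) ∧
        i0 ≤ dp (b - 1) ∧
        (∀ ℓ < b, ds ℓ < i0) := by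
  classical
  -- y0' reaches y0 along directed reactions, by weak reversibility
  have hsym : Relation.ReflTransGen (symStep R) y0' y0 :=
    Relation.ReflTransGen.single (Or.inr hr)
  obtain ⟨k, z, hz0, hzk, hstep⟩ := path_exists R (hwr y0' y0 hsym)
  -- all complexes along the path are in C
  have hy0C : y0 ∈ C := (hnet.1 _ hr).1
  have hy0'C : y0' ∈ C := (hnet.1 _ hr).2.1
  have hC : ∀ j, j ≤ k → z j ∈ C := by
    intro j
    induction j with
    | zero => intro _; rw [hz0]; exact hy0'C
    | succ n ih =>
      intro hn
      exact (hnet.1 _ (hstep n (by omega))).2.1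
  -- tier index of each complex along the path
  have hex : ∀ j, j ≤ k → ∃ i, z j ∈ T i := by
    intro j hj
    have : z j ∈ (⋃ i, T i) := by rw [hTunion]; exact_mod_cast hC j hj
    exact Set.mem_iUnion.mp this
  set t : ℕ → Fin P := fun j => if h : ∃ i, z j ∈ T i then h.choose else i0 with htdef
  have hmemT : ∀ j, j ≤ k → z j ∈ T (t j) := by
    intro j hj
    have h' := hex j hj
    simp only [htdef, dif_pos h']
    exact h'.choose_spec
  have huniq : ∀ (y : Fin N → ℕ) (a b : Fin P), y ∈ T a → y ∈ T b → a = b := by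
    intro y a b ha hb
    by_contra hne
    exact Set.disjoint_left.mp (hTdisj a b hne) ha hb
  have ht0 : t 0 = i1 := huniq y0' _ _ (hz0 ▸ hmemT 0 (Nat.zero_le _)) hy0'
  have htk : t k = i0 := huniq y0 _ _ (hzk ▸ hmemT k le_rfl) hy0
  have h0k : t 0 < t k := by rw [ht0, htk]; exact hlt
  obtain ⟨b, hb, sel, hselk, hds0, hinc, hchain, hlast, hlti0⟩ := key_sel k t h0k
  refine ⟨b, hb, fun ℓ => (z (sel ℓ), z (sel ℓ + 1)), fun ℓ => t (sel ℓ),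
    fun ℓ => t (sel ℓ + 1), ?_, ?_, hinc, hchain, ?_, ?_⟩
  · intro ℓ hℓ
    have hs := hselk ℓ hℓ
    exact ⟨hstep _ hs, hmemT _ (by omega), hmemT _ (by omega)⟩
  · rw [← ht0]; exact hds0
  · rw [← htk]; exact hlast
  · intro ℓ hℓ
    rw [← htk]; exact hlti0 ℓ hℓ
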